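/- Let A and B be commutative semisimple Fréchet algebras. A continuous linear map T : A × B → A × B is a multiplier of A × B if and only if there exist a multiplier T₁ of A and a multiplier T₂ of B such that T(a,b) = (T₁ a, T₂ b) for all a ∈ A and b ∈ B. In other words, M(A ⊕ B) = M(A) ⊕ M(B). -/

import Mathlib

open WeakDual Filter Topology Bornology

/-- A *multiplier* of a commutative topological `ℂ`-algebra `A` is a continuous linear map
`T : A → A` such that `T (a * b) = a * T b` for all `a b : A`. -/
def IsMultiplier {A : Type*} [NonUnitalCommRing A] [Module ℂ A] [TopologicalSpace A]
    (T : A →L[ℂ] A) : Prop :=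
  ∀ a b : A, T (a * b) = a * T b

/-- A commutative topological `ℂ`-algebra is *semisimple* if the intersection of the kernels of
all its characters is `{0}`. -/
def IsSemisimple (A : Type*) [NonUnitalCommRing A] [Module ℂ A] [TopologicalSpace A] : Prop :=
  ∀ a : A, (∀ φ : characterSpace ℂ A, φ a = 0) → a = 0

/-- A (not necessarily unital) commutative topological `ℂ`-algebra is a *Fréchet algebra* if it
is complete and its topology is generated by a countable increasing family of submultiplicative
seminorms (hence it is a complete metrizable locally convex algebra). -/
def IsFrechetAlgebra (A : Type*) [NonUnitalCommRing A] [Module ℂ A]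
    [UniformSpace A] : Prop :=
  ∃ p : ℕ → Seminorm ℂ A, WithSeminorms p ∧ Monotone p ∧
    (∀ (ℓ : ℕ) (x y : A), p ℓ (x * y) ≤ p ℓ x * p ℓ y) ∧ CompleteSpace A


/-- In a semisimple algebra, an element annihilated by everything is zero. -/
lemma eq_zero_of_forall_mul_eq_zero {A : Type*} [NonUnitalCommRing A] [Module ℂ A]
    [TopologicalSpace A] (hss : IsSemisimple A) (x : A) (h : ∀ a : A, a * x = 0) : x = 0 := by
  apply hss
  intro φ
  obtain ⟨a, ha⟩ : ∃ a : A, φ a ≠ 0 := by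
    by_contra hc
    push_neg at hc
    exact φ.prop.1 (ContinuousLinearMap.ext fun a => hc a)
  have : φ (a * x) = 0 := by rw [h]; exact map_zero _
  rw [map_mul] at this
  exact (mul_eq_zero.mp this).resolve_left ha

/-- Let `A` and `B` be commutative semisimple Fréchet algebras.  A continuous
linear map `T : A × B → A × B` is a multiplier of `A × B` if and only if there exist a
multiplier `T₁` of `A` and a multiplier `T₂` of `B` with `T (a, b) = (T₁ a, T₂ b)` for all
`a`, `b`.  In other words, `M(A ⊕ B) = M(A) ⊕ M(B)`. -/
theorem isMultiplier_prod_iff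
    {A B : Type*}
    [NonUnitalCommRing A] [Module ℂ A] [SMulCommClass ℂ A A] [IsScalarTower ℂ A A]
    [UniformSpace A] [IsUniformAddGroup A]
    [NonUnitalCommRing B] [Module ℂ B] [SMulCommClass ℂ B B] [IsScalarTower ℂ B B]
    [UniformSpace B] [IsUniformAddGroup B]
    (hA : IsFrechetAlgebra A) (hB : IsFrechetAlgebra B)
    (hAss : IsSemisimple A) (hBss : IsSemisimple B)
    (T : (A × B) →L[ℂ] (A × B)) :
    IsMultiplier T ↔
      ∃ (T₁ : A →L[ℂ] A) (T₂ : B →L[ℂ] B), IsMultiplier T₁ ∧ IsMultiplier T₂ ∧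
        ∀ (a : A) (b : B), T (a, b) = (T₁ a, T₂ b) := by
  constructor
  · intro hT
    set T₁ : A →L[ℂ] A :=
      (ContinuousLinearMap.fst ℂ A B).comp (T.comp (ContinuousLinearMap.inl ℂ A B)) with hT₁def
    set T₂ : B →L[ℂ] B :=
      (ContinuousLinearMap.snd ℂ A B).comp (T.comp (ContinuousLinearMap.inr ℂ A B)) with hT₂def
    have hsnd : ∀ a : A, (T (a, 0)).2 = 0 := by
      intro a
      apply eq_zero_of_forall_mul_eq_zero hBss
      intro b
      have := hT (0, b) (a, 0)
      simp only [Prod.mk_mul_mk, mul_zero, zero_mul, Prod.mk_eq_zero] at this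
      have h2 := congrArg Prod.snd this
      simpa [Prod.mk_zero_zero] using h2.symm
    have hfst : ∀ b : B, (T (0, b)).1 = 0 := by
      intro b
      apply eq_zero_of_forall_mul_eq_zero hAss
      intro a
      have := hT (a, 0) (0, b)
      simp only [Prod.mk_mul_mk, mul_zero, zero_mul, Prod.mk_eq_zero] at this
      have h1 := congrArg Prod.fst this
      simpa [Prod.mk_zero_zero] using h1.symm
    refine ⟨T₁, T₂, ?_, ?_, ?_⟩
    · intro a b
      have := hT (a, 0) (b, 0)
      have h1 := congrArg Prod.fst this
      simpa [hT₁def] using h1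
    · intro a b
      have := hT (0, a) (0, b)
      have h2 := congrArg Prod.snd this
      simpa [hT₂def] using h2
    · intro a b
      have hsplit : T (a, b) = T (a, 0) + T (0, b) := by
        rw [← map_add]; norm_num
      ext
      · simp [hsplit, hfst b, hT₁def]
      · simp [hsplit, hsnd a, hT₂def]
  · rintro ⟨T₁, T₂, h₁, h₂, hTab⟩
    intro x y
    obtain ⟨a, b⟩ := x
    obtain ⟨a', b'⟩ := y
    simp only [Prod.mk_mul_mk, hTab]
    exact Prod.ext (h₁ a a') (h₂ b b')
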